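/- Let aᵢ, bᵢ : ℝⁿ → ℝⁿ, i = 1, …, m, be continuous maps with aᵢ(x) ≤ bᵢ(x) componentwise for every x ∈ ℝⁿ. For x ∈ ℝⁿ define F_x(v) := max_{1≤i≤m} (½⟨aᵢ(x) + bᵢ(x), v⟩ + ½⟨bᵢ(x) − aᵢ(x), |v|⟩) and ξ(x) := inf_{v ∈ ℝⁿ} (F_x(v) + ½‖v‖²). Then for every x the infimum is attained, and the function ξ : ℝⁿ → ℝ is continuous on ℝⁿ. -/

import Mathlib

open RealInnerProductSpace

/-- Componentwise absolute value `|v| = (|v₁|, …, |vₙ|)` of a vector in `ℝⁿ`. -/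
noncomputable def vabs {n : ℕ} (v : EuclideanSpace ℝ (Fin n)) : EuclideanSpace ℝ (Fin n) :=
  WithLp.toLp 2 (fun j => |v j|)

/-- Maximum of finitely many reals indexed by a nonempty `Fin m`. -/
noncomputable def fsup {m : ℕ} (hm : 0 < m) (f : Fin m → ℝ) : ℝ :=
  Finset.univ.sup' (Finset.univ_nonempty_iff.mpr (Fin.pos_iff_nonempty.mp hm)) f

/-- Upper endpoint function `ḡᵢ(v) = ½⟨aᵢ + bᵢ, v⟩ + ½⟨bᵢ − aᵢ, |v|⟩`. -/
noncomputable def gbar {n m : ℕ} (a b : Fin m → EuclideanSpace ℝ (Fin n)) (i : Fin m)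
    (v : EuclideanSpace ℝ (Fin n)) : ℝ :=
  (1 / 2) * ⟪a i + b i, v⟫ + (1 / 2) * ⟪b i - a i, vabs v⟫

/-- `F(v) = max_{1 ≤ i ≤ m} ḡᵢ(v)`. -/
noncomputable def Fmax {n m : ℕ} (hm : 0 < m) (a b : Fin m → EuclideanSpace ℝ (Fin n))
    (v : EuclideanSpace ℝ (Fin n)) : ℝ :=
  fsup hm fun i => gbar a b i v

lemma vabs_norm {n : ℕ} (v : EuclideanSpace ℝ (Fin n)) : ‖vabs v‖ = ‖v‖ := by
  simp [EuclideanSpace.norm_eq, vabs]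

lemma vabs_continuous {n : ℕ} : Continuous (vabs (n := n)) := by
  unfold vabs; fun_prop

lemma vabs_zero {n : ℕ} : vabs (n := n) 0 = 0 := by
  ext j; simp [vabs]

lemma fsup_le {m : ℕ} (hm : 0 < m) {f : Fin m → ℝ} {c : ℝ} (h : ∀ i, f i ≤ c) :
    fsup hm f ≤ c :=
  Finset.sup'_le _ _ fun i _ => h i

lemma le_fsup {m : ℕ} (hm : 0 < m) (f : Fin m → ℝ) (i : Fin m) : f i ≤ fsup hm f :=
  Finset.le_sup' _ (Finset.mem_univ i)

lemma fsup_continuous {m : ℕ} {X : Type*} [TopologicalSpace X] (hm : 0 < m)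
    {f : Fin m → X → ℝ} (hf : ∀ i, Continuous (f i)) :
    Continuous fun x => fsup hm fun i => f i x :=
  Continuous.finset_sup'_apply _ fun i _ => hf i

noncomputable def Kbd {n m : ℕ} (hm : 0 < m) (a b : Fin m → EuclideanSpace ℝ (Fin n)) : ℝ :=
  fsup hm fun i => ‖a i‖ + ‖b i‖

lemma Kbd_nonneg {n m : ℕ} (hm : 0 < m) (a b : Fin m → EuclideanSpace ℝ (Fin n)) :
    0 ≤ Kbd hm a b := by
  have i : Fin m := ⟨0, hm⟩
  exact le_trans (by positivity) (le_fsup hm _ i)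

lemma half_inner_bound {n : ℕ} (p q v : EuclideanSpace ℝ (Fin n)) :
    |(1 / 2) * ⟪p + q, v⟫ + (1 / 2) * ⟪q - p, vabs v⟫| ≤ (‖p‖ + ‖q‖) * ‖v‖ := by
  have h1 : |(⟪p + q, v⟫ : ℝ)| ≤ ‖p + q‖ * ‖v‖ := abs_real_inner_le_norm _ _
  have h2 : |(⟪q - p, vabs v⟫ : ℝ)| ≤ ‖q - p‖ * ‖v‖ := by
    simpa [vabs_norm] using abs_real_inner_le_norm (q - p) (vabs v)
  have h3 : ‖p + q‖ ≤ ‖p‖ + ‖q‖ := norm_add_le _ _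
  have h4 : ‖q - p‖ ≤ ‖p‖ + ‖q‖ := by simpa [add_comm] using norm_sub_le q p
  have hv : (0:ℝ) ≤ ‖v‖ := norm_nonneg _
  calc |(1 / 2) * ⟪p + q, v⟫ + (1 / 2) * ⟪q - p, vabs v⟫|
      ≤ |(1 / 2) * (⟪p + q, v⟫ : ℝ)| + |(1 / 2) * (⟪q - p, vabs v⟫ : ℝ)| := abs_add_le _ _
    _ = (1/2) * |(⟪p + q, v⟫ : ℝ)| + (1/2) * |(⟪q - p, vabs v⟫ : ℝ)| := by
        rw [abs_mul, abs_mul, abs_of_pos (show (0:ℝ) < 1/2 by norm_num)]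
    _ ≤ (1/2) * ((‖p‖ + ‖q‖) * ‖v‖) + (1/2) * ((‖p‖ + ‖q‖) * ‖v‖) := by
        gcongr
        · exact h1.trans (by gcongr)
        · exact h2.trans (by gcongr)
    _ = (‖p‖ + ‖q‖) * ‖v‖ := by ring

lemma gbar_abs_le {n m : ℕ} (a b : Fin m → EuclideanSpace ℝ (Fin n)) (i : Fin m)
    (v : EuclideanSpace ℝ (Fin n)) : |gbar a b i v| ≤ (‖a i‖ + ‖b i‖) * ‖v‖ :=
  half_inner_bound (a i) (b i) v

lemma Fmax_lower {n m : ℕ} (hm : 0 < m) (a b : Fin m → EuclideanSpace ℝ (Fin n))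
    (v : EuclideanSpace ℝ (Fin n)) : -(Kbd hm a b * ‖v‖) ≤ Fmax hm a b v := by
  have i : Fin m := ⟨0, hm⟩
  refine le_trans ?_ (le_fsup hm _ i)
  have h1 := (abs_le.mp (gbar_abs_le a b i v)).1
  have h2 : (‖a i‖ + ‖b i‖) * ‖v‖ ≤ Kbd hm a b * ‖v‖ :=
    mul_le_mul_of_nonneg_right (le_fsup hm (fun j => ‖a j‖ + ‖b j‖) i) (norm_nonneg _)
  linarith

lemma gbar_zero {n m : ℕ} (a b : Fin m → EuclideanSpace ℝ (Fin n)) (i : Fin m) :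
    gbar a b i 0 = 0 := by
  simp [gbar, vabs_zero]

lemma Fmax_zero {n m : ℕ} (hm : 0 < m) (a b : Fin m → EuclideanSpace ℝ (Fin n)) :
    Fmax hm a b 0 = 0 := by
  unfold Fmax fsup
  rw [Finset.sup'_congr _ rfl (fun i _ => gbar_zero a b i)]
  simp

lemma Fmax_continuous {n m : ℕ} (hm : 0 < m) (a b : Fin m → EuclideanSpace ℝ (Fin n)) :
    Continuous (Fmax hm a b) := by
  apply fsup_continuous hm
  intro i
  unfold gbar
  have h1 : Continuous fun v : EuclideanSpace ℝ (Fin n) => (⟪b i - a i, vabs v⟫ : ℝ) :=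
    continuous_const.inner vabs_continuous
  have h2 : Continuous fun v : EuclideanSpace ℝ (Fin n) => (⟪a i + b i, v⟫ : ℝ) :=
    continuous_const.inner continuous_id
  exact (continuous_const.mul h2).add (continuous_const.mul h1)

lemma Fmax_sub_le {n m : ℕ} (hm : 0 < m) (a b a' b' : Fin m → EuclideanSpace ℝ (Fin n))
    (v : EuclideanSpace ℝ (Fin n)) :
    Fmax hm a b v - Fmax hm a' b' v ≤
      (fsup hm fun i => ‖a i - a' i‖ + ‖b i - b' i‖) * ‖v‖ := by
  rw [sub_le_iff_le_add]
  apply fsup_le hm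
  intro i
  have key : gbar a b i v - gbar a' b' i v ≤ (‖a i - a' i‖ + ‖b i - b' i‖) * ‖v‖ := by
    have heq : gbar a b i v - gbar a' b' i v =
        (1 / 2) * ⟪(a i - a' i) + (b i - b' i), v⟫
          + (1 / 2) * ⟪(b i - b' i) - (a i - a' i), vabs v⟫ := by
      simp only [gbar, inner_sub_left, inner_add_left]
      ring
    rw [heq]
    exact le_trans (le_abs_self _) (half_inner_bound _ _ v)
  have h2 : gbar a' b' i v ≤ Fmax hm a' b' v := by
    unfold Fmax; exact le_fsup hm (fun j => gbar a' b' j v) i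
  have h3 : (‖a i - a' i‖ + ‖b i - b' i‖) * ‖v‖ ≤
      (fsup hm fun j => ‖a j - a' j‖ + ‖b j - b' j‖) * ‖v‖ :=
    mul_le_mul_of_nonneg_right (le_fsup hm (fun j => ‖a j - a' j‖ + ‖b j - b' j‖) i) (norm_nonneg _)
  linarith

noncomputable def Phi {n m : ℕ} (hm : 0 < m) (a b : Fin m → EuclideanSpace ℝ (Fin n))
    (v : EuclideanSpace ℝ (Fin n)) : ℝ :=
  Fmax hm a b v + (1 / 2) * ‖v‖ ^ 2

lemma Phi_lower {n m : ℕ} (hm : 0 < m) (a b : Fin m → EuclideanSpace ℝ (Fin n))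
    (v : EuclideanSpace ℝ (Fin n)) :
    -(Kbd hm a b * ‖v‖) + (1 / 2) * ‖v‖ ^ 2 ≤ Phi hm a b v := by
  have := Fmax_lower hm a b v
  unfold Phi; linarith

lemma Phi_bddBelow {n m : ℕ} (hm : 0 < m) (a b : Fin m → EuclideanSpace ℝ (Fin n))
    (v : EuclideanSpace ℝ (Fin n)) :
    -(Kbd hm a b ^ 2 / 2) ≤ Phi hm a b v := by
  have h := Phi_lower hm a b v
  nlinarith [sq_nonneg (‖v‖ - Kbd hm a b)]

lemma Phi_zero {n m : ℕ} (hm : 0 < m) (a b : Fin m → EuclideanSpace ℝ (Fin n)) :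
    Phi hm a b 0 = 0 := by
  simp [Phi, Fmax_zero hm a b]

lemma exists_min {n m : ℕ} (hm : 0 < m) (a b : Fin m → EuclideanSpace ℝ (Fin n)) :
    ∃ v₀ : EuclideanSpace ℝ (Fin n), ‖v₀‖ ≤ 2 * Kbd hm a b + 1 ∧
      ∀ v, Phi hm a b v₀ ≤ Phi hm a b v := by
  set K := Kbd hm a b with hK
  have hK0 : 0 ≤ K := Kbd_nonneg hm a b
  set S := Metric.closedBall (0 : EuclideanSpace ℝ (Fin n)) (2 * K + 1) with hS
  have hSne : S.Nonempty := ⟨0, by simp [hS]; linarith⟩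
  have hcont : Continuous (Phi hm a b) :=
    (Fmax_continuous hm a b).add (continuous_const.mul ((continuous_norm).pow 2))
  obtain ⟨v₀, hv₀S, hmin⟩ :=
    (isCompact_closedBall (0 : EuclideanSpace ℝ (Fin n)) (2 * K + 1)).exists_isMinOn hSne
      hcont.continuousOn
  refine ⟨v₀, by simpa [hS, Metric.mem_closedBall, dist_zero_right] using hv₀S, ?_⟩
  intro v
  by_cases hv : v ∈ S
  · exact hmin hv
  · have hvn : 2 * K + 1 < ‖v‖ := by
      simp only [hS, Metric.mem_closedBall, dist_zero_right, not_le] at hv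
      exact hv
    have h0S : (0 : EuclideanSpace ℝ (Fin n)) ∈ S := by simp [hS]; linarith
    have h1 : Phi hm a b v₀ ≤ Phi hm a b 0 := hmin h0S
    rw [Phi_zero hm a b] at h1
    have h2 := Phi_lower hm a b v
    nlinarith [norm_nonneg v]

lemma iInf_Phi_eq {n m : ℕ} (hm : 0 < m) (a b : Fin m → EuclideanSpace ℝ (Fin n))
    {v₀ : EuclideanSpace ℝ (Fin n)} (hmin : ∀ v, Phi hm a b v₀ ≤ Phi hm a b v) :
    (⨅ v : EuclideanSpace ℝ (Fin n), Phi hm a b v) = Phi hm a b v₀ := by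
  refine le_antisymm (ciInf_le ⟨-(Kbd hm a b ^ 2 / 2), ?_⟩ v₀) (le_ciInf hmin)
  rintro x ⟨v, rfl⟩
  exact Phi_bddBelow hm a b v

/-- one-sided comparison of the two infima -/
lemma xi_sub_le {n m : ℕ} (hm : 0 < m) (a b a' b' : Fin m → EuclideanSpace ℝ (Fin n)) :
    (⨅ v : EuclideanSpace ℝ (Fin n), Phi hm a b v) -
      (⨅ v : EuclideanSpace ℝ (Fin n), Phi hm a' b' v) ≤
      (fsup hm fun i => ‖a i - a' i‖ + ‖b i - b' i‖) * (2 * Kbd hm a' b' + 1) := by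
  obtain ⟨v₀, _, hmin₀⟩ := exists_min hm a b
  obtain ⟨v₁, hv₁, hmin₁⟩ := exists_min hm a' b'
  rw [iInf_Phi_eq hm a b hmin₀, iInf_Phi_eq hm a' b' hmin₁]
  have h1 : Phi hm a b v₀ ≤ Phi hm a b v₁ := hmin₀ v₁
  have h2 : Phi hm a b v₁ - Phi hm a' b' v₁ ≤
      (fsup hm fun i => ‖a i - a' i‖ + ‖b i - b' i‖) * ‖v₁‖ := by
    have := Fmax_sub_le hm a b a' b' v₁
    unfold Phi; linarith
  have hD : 0 ≤ fsup hm fun i => ‖a i - a' i‖ + ‖b i - b' i‖ := by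
    have i : Fin m := ⟨0, hm⟩
    exact le_trans (by positivity) (le_fsup hm (fun i => ‖a i - a' i‖ + ‖b i - b' i‖) i)
  have h3 : (fsup hm fun i => ‖a i - a' i‖ + ‖b i - b' i‖) * ‖v₁‖ ≤
      (fsup hm fun i => ‖a i - a' i‖ + ‖b i - b' i‖) * (2 * Kbd hm a' b' + 1) :=
    mul_le_mul_of_nonneg_left hv₁ hD
  linarith


/-- Part (v) of the descent-direction-finding lemma: with continuous endpoint maps
`aᵢ, bᵢ : ℝⁿ → ℝⁿ`, the infimum `ξ(x) = inf_v (F_x(v) + ½‖v‖²)` is attained for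
every `x`, and `ξ` is continuous on `ℝⁿ`. -/
theorem xi_attained_and_continuous {n m : ℕ} (hm : 0 < m)
    (a b : Fin m → EuclideanSpace ℝ (Fin n) → EuclideanSpace ℝ (Fin n))
    (ha : ∀ i, Continuous (a i)) (hb : ∀ i, Continuous (b i))
    (hab : ∀ i x j, a i x j ≤ b i x j) :
    (∀ x : EuclideanSpace ℝ (Fin n), ∃ v₀ : EuclideanSpace ℝ (Fin n),
      (∀ v, Fmax hm (fun i => a i x) (fun i => b i x) v₀ + (1 / 2) * ‖v₀‖ ^ 2 ≤
        Fmax hm (fun i => a i x) (fun i => b i x) v + (1 / 2) * ‖v‖ ^ 2) ∧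
      (⨅ v : EuclideanSpace ℝ (Fin n),
          (Fmax hm (fun i => a i x) (fun i => b i x) v + (1 / 2) * ‖v‖ ^ 2)) =
        Fmax hm (fun i => a i x) (fun i => b i x) v₀ + (1 / 2) * ‖v₀‖ ^ 2) ∧
    Continuous (fun x : EuclideanSpace ℝ (Fin n) =>
      ⨅ v : EuclideanSpace ℝ (Fin n),
        (Fmax hm (fun i => a i x) (fun i => b i x) v + (1 / 2) * ‖v‖ ^ 2)) := by
  constructor
  · intro x
    obtain ⟨v₀, _, hmin⟩ := exists_min hm (fun i => a i x) (fun i => b i x)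
    exact ⟨v₀, hmin, iInf_Phi_eq hm _ _ hmin⟩
  · change Continuous fun x => ⨅ v, Phi hm (fun i => a i x) (fun i => b i x) v
    rw [continuous_iff_continuousAt]
    intro x₀
    set ξ : EuclideanSpace ℝ (Fin n) → ℝ :=
      fun x => ⨅ v, Phi hm (fun i => a i x) (fun i => b i x) v with hξ
    set D : EuclideanSpace ℝ (Fin n) → ℝ :=
      fun y => fsup hm fun i => ‖a i y - a i x₀‖ + ‖b i y - b i x₀‖ with hD
    set K : EuclideanSpace ℝ (Fin n) → ℝ :=
      fun y => Kbd hm (fun i => a i y) (fun i => b i y) with hKdef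
    set G : EuclideanSpace ℝ (Fin n) → ℝ :=
      fun y => D y * (2 * K y + 2 * K x₀ + 2) with hG
    have hK0 : ∀ y, 0 ≤ K y := fun y => Kbd_nonneg hm _ _
    have hD0 : ∀ y, 0 ≤ D y := by
      intro y
      have i : Fin m := ⟨0, hm⟩
      exact le_trans (by positivity)
        (le_fsup hm (fun i => ‖a i y - a i x₀‖ + ‖b i y - b i x₀‖) i)
    have hbound : ∀ y, |ξ y - ξ x₀| ≤ G y := by
      intro y
      rw [abs_le]
      constructor
      · -- ξ x₀ - ξ y ≤ G y, i.e. -(G y) ≤ ξ y - ξ x₀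
        have h := xi_sub_le hm (fun i => a i x₀) (fun i => b i x₀)
          (fun i => a i y) (fun i => b i y)
        have hDrev : (fsup hm fun i => ‖a i x₀ - a i y‖ + ‖b i x₀ - b i y‖) = D y := by
          rw [hD]
          congr 1
          funext i
          rw [norm_sub_rev (a i x₀), norm_sub_rev (b i x₀)]
        rw [hDrev] at h
        have hKy : K y = Kbd hm (fun i => a i y) (fun i => b i y) := rfl
        have hGy : G y = D y * (2 * K y + 2 * K x₀ + 2) := rfl
        have h2 : D y * (2 * K y + 1) ≤ G y := by
          rw [hGy]
          have := hK0 x₀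
          nlinarith [hD0 y]
        have hξy : ξ y = ⨅ v, Phi hm (fun i => a i y) (fun i => b i y) v := rfl
        have hξx : ξ x₀ = ⨅ v, Phi hm (fun i => a i x₀) (fun i => b i x₀) v := rfl
        rw [← hξy, ← hξx] at h
        linarith
      · have h := xi_sub_le hm (fun i => a i y) (fun i => b i y)
          (fun i => a i x₀) (fun i => b i x₀)
        have hKx : K x₀ = Kbd hm (fun i => a i x₀) (fun i => b i x₀) := rfl
        have hDy : D y = fsup hm fun i => ‖a i y - a i x₀‖ + ‖b i y - b i x₀‖ := rfl
        have hGy : G y = D y * (2 * K y + 2 * K x₀ + 2) := rfl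
        have h2 : D y * (2 * K x₀ + 1) ≤ G y := by
          rw [hGy]
          have := hK0 y
          nlinarith [hD0 y]
        have hξy : ξ y = ⨅ v, Phi hm (fun i => a i y) (fun i => b i y) v := rfl
        have hξx : ξ x₀ = ⨅ v, Phi hm (fun i => a i x₀) (fun i => b i x₀) v := rfl
        rw [← hξy, ← hξx] at h
        linarith
    have hDcont : Continuous D := by
      rw [hD]
      apply fsup_continuous hm
      intro i
      exact (((ha i).sub continuous_const).norm).add (((hb i).sub continuous_const).norm)
    have hKcont : Continuous K := by
      rw [hKdef]
      unfold Kbd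
      apply fsup_continuous hm
      intro i
      exact ((ha i).norm).add ((hb i).norm)
    have hGcont : Continuous G := by
      rw [hG]
      fun_prop
    have hG0 : G x₀ = 0 := by
      have : D x₀ = 0 := by
        rw [hD]
        simp only [sub_self, norm_zero, add_zero]
        unfold fsup
        simp
      have hGx : G x₀ = D x₀ * (2 * K x₀ + 2 * K x₀ + 2) := rfl
      rw [hGx, this, zero_mul]
    have hGtend : Filter.Tendsto G (nhds x₀) (nhds 0) := by
      rw [← hG0]
      exact hGcont.tendsto x₀
    have hsq := squeeze_zero (fun y => abs_nonneg (ξ y - ξ x₀)) hbound hGtend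
    rw [ContinuousAt, tendsto_iff_dist_tendsto_zero]
    simpa [Real.dist_eq] using hsq
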